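/- For every real t with |t| ≥ 1 (t ≠ 0), artanh(((1 - t + 2t²)/(1 - t + 3t² - 2t³ + 4t⁴)) · t√5) equals -(1/2)[log(1 - 2q cos(π/20) + q²) - log(1 - 2q cos(7π/20) + q²) + log(1 - 2q cos(9π/20) + q²) - log(1 - 2q cos(17π/20) + q²)], where q = 1/(t√2). -/

import Mathlib

/-- The real inverse hyperbolic tangent: artanh x = (1/2) log ((1+x)/(1-x)). -/
noncomputable def Real.artanh' (x : ℝ) : ℝ := (1 / 2) * Real.log ((1 + x) / (1 - x))

private lemma quad_pos (q c : ℝ) (hqb : q ^ 2 ≤ 1/2) (h1 : -1 ≤ c) (h2 : c ≤ 1) :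
    0 < 1 - 2*q*c + q^2 := by
  have hqa : |q| ≤ 3/4 := by nlinarith [sq_abs q, abs_nonneg q]
  have habs : q * c ≤ |q| := by
    calc q * c ≤ |q * c| := le_abs_self _
      _ = |q| * |c| := abs_mul q c
      _ ≤ |q| * 1 := mul_le_mul_of_nonneg_left (abs_le.mpr ⟨h1, h2⟩) (abs_nonneg q)
      _ = |q| := mul_one _
  have p3 : (3/4 - |q|) * (5/4 - |q|) ≥ 0 :=
    mul_nonneg (by linarith) (by linarith)
  nlinarith [habs, p3, sq_abs q]

theorem artanh_eq_log_combination (t : ℝ) (ht : 1 ≤ |t|) :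
    Real.artanh' (((1 - t + 2 * t ^ 2) / (1 - t + 3 * t ^ 2 - 2 * t ^ 3 + 4 * t ^ 4)) *
        (t * Real.sqrt 5))
      = -(1 / 2) *
          (Real.log (1 - 2 * (1 / (t * Real.sqrt 2)) * Real.cos (Real.pi / 20) +
              (1 / (t * Real.sqrt 2)) ^ 2)
           - Real.log (1 - 2 * (1 / (t * Real.sqrt 2)) * Real.cos (7 * Real.pi / 20) +
              (1 / (t * Real.sqrt 2)) ^ 2)
           + Real.log (1 - 2 * (1 / (t * Real.sqrt 2)) * Real.cos (9 * Real.pi / 20) +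
              (1 / (t * Real.sqrt 2)) ^ 2)
           - Real.log (1 - 2 * (1 / (t * Real.sqrt 2)) * Real.cos (17 * Real.pi / 20) +
              (1 / (t * Real.sqrt 2)) ^ 2)) := by
  have ht0 : t ≠ 0 := by intro h; rw [h, abs_zero] at ht; linarith
  have ht2 : 1 ≤ t ^ 2 := by nlinarith [sq_abs t, abs_nonneg t]
  have hs2 : Real.sqrt 2 ^ 2 = 2 := Real.sq_sqrt (by norm_num)
  have hs2pos : (0:ℝ) < Real.sqrt 2 := Real.sqrt_pos.mpr (by norm_num)
  have hs5 : Real.sqrt 5 ^ 2 = 5 := Real.sq_sqrt (by norm_num)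
  -- trigonometric values
  have hc25 : Real.cos (2*Real.pi/5) = (Real.sqrt 5 - 1)/4 := by
    have h := Real.cos_two_mul (Real.pi/5)
    rw [Real.cos_pi_div_five] at h
    rw [show (2*Real.pi/5 : ℝ) = 2*(Real.pi/5) by ring, h]
    linear_combination (1/8) * hs5
  have hc35 : Real.cos (3*Real.pi/5) = (1 - Real.sqrt 5)/4 := by
    rw [show (3*Real.pi/5 : ℝ) = Real.pi - 2*Real.pi/5 by ring, Real.cos_pi_sub, hc25]
    ring
  have hs45 : Real.sin (Real.pi/5) ^ 2 = 1 - ((1 + Real.sqrt 5)/4)^2 := by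
    rw [Real.sin_sq, Real.cos_pi_div_five]
  have hs35 : Real.sin (3*Real.pi/5) ^ 2 = 1 - ((1 - Real.sqrt 5)/4)^2 := by
    rw [Real.sin_sq, hc35]
  have hsum1 : Real.cos (Real.pi/20) + Real.cos (9*Real.pi/20)
      = Real.sqrt 2 * (1 + Real.sqrt 5)/4 := by
    rw [show (Real.pi/20 : ℝ) = Real.pi/4 - Real.pi/5 by ring,
        show (9*Real.pi/20 : ℝ) = Real.pi/4 + Real.pi/5 by ring,
        Real.cos_sub, Real.cos_add, Real.cos_pi_div_four, Real.cos_pi_div_five]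
    ring
  have hprod1 : Real.cos (Real.pi/20) * Real.cos (9*Real.pi/20)
      = (Real.sqrt 5 - 1)/8 := by
    rw [show (Real.pi/20 : ℝ) = Real.pi/4 - Real.pi/5 by ring,
        show (9*Real.pi/20 : ℝ) = Real.pi/4 + Real.pi/5 by ring,
        Real.cos_sub, Real.cos_add, Real.cos_pi_div_four, Real.sin_pi_div_four,
        Real.cos_pi_div_five]
    linear_combination ((((1+Real.sqrt 5)/4)^2 - Real.sin (Real.pi/5)^2)/4) * hs2
      - (1/2) * hs45 + (1/16) * hs5
  have hsum2 : Real.cos (7*Real.pi/20) + Real.cos (17*Real.pi/20)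
      = Real.sqrt 2 * (1 - Real.sqrt 5)/4 := by
    rw [show (7*Real.pi/20 : ℝ) = 3*Real.pi/5 - Real.pi/4 by ring,
        show (17*Real.pi/20 : ℝ) = 3*Real.pi/5 + Real.pi/4 by ring,
        Real.cos_sub, Real.cos_add, Real.cos_pi_div_four, hc35]
    ring
  have hprod2 : Real.cos (7*Real.pi/20) * Real.cos (17*Real.pi/20)
      = -(1 + Real.sqrt 5)/8 := by
    rw [show (7*Real.pi/20 : ℝ) = 3*Real.pi/5 - Real.pi/4 by ring,
        show (17*Real.pi/20 : ℝ) = 3*Real.pi/5 + Real.pi/4 by ring,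
        Real.cos_sub, Real.cos_add, Real.cos_pi_div_four, Real.sin_pi_div_four, hc35]
    linear_combination ((((1-Real.sqrt 5)/4)^2 - Real.sin (3*Real.pi/5)^2)/4) * hs2
      - (1/2) * hs35 + (1/16) * hs5
  -- abbreviations
  set q : ℝ := 1 / (t * Real.sqrt 2) with hq
  have hq2 : q ^ 2 = 1/(2*t^2) := by
    rw [hq, div_pow, one_pow, mul_pow, hs2]; ring
  have hqs : Real.sqrt 2 * q = 1/t := by
    rw [hq]; field_simp
  set A := 1 - 2 * q * Real.cos (Real.pi / 20) + q ^ 2 with hA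
  set B := 1 - 2 * q * Real.cos (7 * Real.pi / 20) + q ^ 2 with hB
  set C := 1 - 2 * q * Real.cos (9 * Real.pi / 20) + q ^ 2 with hC
  set D := 1 - 2 * q * Real.cos (17 * Real.pi / 20) + q ^ 2 with hD
  clear_value q
  clear_value A B C D
  -- positivity of the quadratic factors
  have hqb : q ^ 2 ≤ 1/2 := by
    rw [hq2]
    rw [div_le_div_iff₀ (by positivity) (by norm_num)]
    linarith
  have key : ∀ c : ℝ, -1 ≤ c → c ≤ 1 → 0 < 1 - 2*q*c + q^2 :=
    fun c h1 h2 => quad_pos q c hqb h1 h2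
  have posA : 0 < A := by
    rw [hA]; exact key _ (Real.neg_one_le_cos _) (Real.cos_le_one _)
  have posB : 0 < B := by
    rw [hB]; exact key _ (Real.neg_one_le_cos _) (Real.cos_le_one _)
  have posC : 0 < C := by
    rw [hC]; exact key _ (Real.neg_one_le_cos _) (Real.cos_le_one _)
  have posD : 0 < D := by
    rw [hD]; exact key _ (Real.neg_one_le_cos _) (Real.cos_le_one _)
  -- the key algebraic identities
  have expand1 : A * C = (1 + 1/(2*t^2))^2 - (1/t)*((1+Real.sqrt 5)/2)*(1 + 1/(2*t^2))
      + (1/(2*t^2))*((Real.sqrt 5 - 1)/2) := by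
    have h : A * C = (1+q^2)^2
        - ((Real.cos (Real.pi/20) + Real.cos (9*Real.pi/20))*q)*(1+q^2)*2
        + (Real.cos (Real.pi/20) * Real.cos (9*Real.pi/20))*q^2*4 := by
      rw [hA, hC]; ring
    rw [hsum1, hprod1] at h
    rw [h, ← hqs, ← hq2]
    ring
  have expand2 : B * D = (1 + 1/(2*t^2))^2 + (1/t)*((Real.sqrt 5 - 1)/2)*(1 + 1/(2*t^2))
      - (1/(2*t^2))*((1 + Real.sqrt 5)/2) := by
    have h : B * D = (1+q^2)^2
        - ((Real.cos (7*Real.pi/20) + Real.cos (17*Real.pi/20))*q)*(1+q^2)*2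
        + (Real.cos (7*Real.pi/20) * Real.cos (17*Real.pi/20))*q^2*4 := by
      rw [hB, hD]; ring
    rw [hsum2, hprod2] at h
    rw [h, ← hqs, ← hq2]
    ring
  have hACeq : (1 - t + 3 * t ^ 2 - 2 * t ^ 3 + 4 * t ^ 4)
      - (1 - t + 2 * t ^ 2) * (t * Real.sqrt 5) = 4 * t ^ 4 * (A * C) := by
    rw [expand1]; field_simp; ring
  have hBDeq : (1 - t + 3 * t ^ 2 - 2 * t ^ 3 + 4 * t ^ 4)
      + (1 - t + 2 * t ^ 2) * (t * Real.sqrt 5) = 4 * t ^ 4 * (B * D) := by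
    rw [expand2]; field_simp; ring
  have ht4 : (0:ℝ) < 4 * t ^ 4 := by positivity
  have hDm : 0 < (1 - t + 3 * t ^ 2 - 2 * t ^ 3 + 4 * t ^ 4)
      - (1 - t + 2 * t ^ 2) * (t * Real.sqrt 5) := by
    rw [hACeq]; exact mul_pos ht4 (mul_pos posA posC)
  have hDp : 0 < (1 - t + 3 * t ^ 2 - 2 * t ^ 3 + 4 * t ^ 4)
      + (1 - t + 2 * t ^ 2) * (t * Real.sqrt 5) := by
    rw [hBDeq]; exact mul_pos ht4 (mul_pos posB posD)
  have hD0 : (0:ℝ) < 1 - t + 3 * t ^ 2 - 2 * t ^ 3 + 4 * t ^ 4 := by linarith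
  set x : ℝ := ((1 - t + 2 * t ^ 2) / (1 - t + 3 * t ^ 2 - 2 * t ^ 3 + 4 * t ^ 4)) *
      (t * Real.sqrt 5) with hxdef
  clear_value x
  have h1x : 1 + x = ((1 - t + 3 * t ^ 2 - 2 * t ^ 3 + 4 * t ^ 4)
      + (1 - t + 2 * t ^ 2) * (t * Real.sqrt 5)) / (1 - t + 3 * t ^ 2 - 2 * t ^ 3 + 4 * t ^ 4) := by
    rw [hxdef, add_div (1 - t + 3 * t ^ 2 - 2 * t ^ 3 + 4 * t ^ 4), div_self hD0.ne']; ring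
  have h2x : 1 - x = ((1 - t + 3 * t ^ 2 - 2 * t ^ 3 + 4 * t ^ 4)
      - (1 - t + 2 * t ^ 2) * (t * Real.sqrt 5)) / (1 - t + 3 * t ^ 2 - 2 * t ^ 3 + 4 * t ^ 4) := by
    rw [hxdef, sub_div (1 - t + 3 * t ^ 2 - 2 * t ^ 3 + 4 * t ^ 4), div_self hD0.ne']; ring
  have hx : (1 + x) / (1 - x) = (B * D) / (A * C) := by
    rw [h1x, h2x, hACeq, hBDeq, div_div_div_cancel_right₀ hD0.ne',
      mul_div_mul_left _ _ (by positivity : (4:ℝ) * t ^ 4 ≠ 0)]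
  rw [Real.artanh', hx, Real.log_div (mul_pos posB posD).ne' (mul_pos posA posC).ne',
      Real.log_mul posB.ne' posD.ne', Real.log_mul posA.ne' posC.ne']
  ring
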